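/- arXiv:1509.07158 — 2 statements merged into one kernel-verified Lean document; each statement's English description precedes it below -/
import Mathlib

section
/- Let L_n: ℝ^d → ℝ be convex and differentiable, let P be a seminorm on ℝ^d, let θ* ∈ ℝ^d, and suppose subspaces M ⊆ M̄ ⊆ ℝ^d satisfy the decomposability property P(θ + γ) = P(θ) + P(γ) for all θ ∈ M and γ ∈ M̄^⊥. Then for any Δ ∈ ℝ^d, P(θ* + Δ) − P(θ*) ≥ P(Δ_{M̄^⊥}) − P(Δ_{M̄}) − 2P(θ*_{M^⊥}), where Δ_N denotes the orthogonal projection of Δ onto subspace N. -/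
open MeasureTheory

theorem stmt_12 (d : ℕ) (L : EuclideanSpace ℝ (Fin d) → ℝ)
    (hLconv : ConvexOn ℝ Set.univ L) (hLdiff : Differentiable ℝ L)
    (P : Seminorm ℝ (EuclideanSpace ℝ (Fin d)))
    (M Mbar : Submodule ℝ (EuclideanSpace ℝ (Fin d))) (hMM : M ≤ Mbar)
    (hdecomp : ∀ θ ∈ M, ∀ γ ∈ Mbarᗮ, P (θ + γ) = P θ + P γ)
    (θstar Δ : EuclideanSpace ℝ (Fin d)) :
    P (θstar + Δ) - P θstar
      ≥ P (↑(Mbarᗮ.orthogonalProjectionOnto Δ)) - P (↑(Mbar.orthogonalProjectionOnto Δ))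
        - 2 * P (↑(Mᗮ.orthogonalProjectionOnto θstar)) := by
  set a : EuclideanSpace ℝ (Fin d) := ↑(M.orthogonalProjectionOnto θstar)
  set b : EuclideanSpace ℝ (Fin d) := ↑(Mᗮ.orthogonalProjectionOnto θstar)
  set c : EuclideanSpace ℝ (Fin d) := ↑(Mbar.orthogonalProjectionOnto Δ)
  set e : EuclideanSpace ℝ (Fin d) := ↑(Mbarᗮ.orthogonalProjectionOnto Δ)
  have hθ : a + b = θstar := Submodule.starProjection_add_starProjection_orthogonal (K := M) θstar
  have hΔ : c + e = Δ := Submodule.starProjection_add_starProjection_orthogonal (K := Mbar) Δ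
  have hae : P (a + e) = P a + P e :=
    hdecomp a (M.orthogonalProjectionOnto θstar).2 e (Mbarᗮ.orthogonalProjectionOnto Δ).2
  have h1 : P (a + e) ≤ P (θstar + Δ) + (P b + P c) := by
    calc P (a + e) = P ((θstar + Δ) + (-(b + c))) := by
          congr 1
          rw [← hθ, ← hΔ]; abel
      _ ≤ P (θstar + Δ) + P (-(b + c)) := map_add_le_add P _ _
      _ ≤ P (θstar + Δ) + (P b + P c) := by
          rw [map_neg_eq_map]
          exact add_le_add_right (map_add_le_add P b c) _
  have h2 : P θstar ≤ P a + P b := by rw [← hθ]; exact map_add_le_add P a b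
  rw [hae] at h1
  linarith
end

section
/- Let σ₁ > 0, ρ ∈ (−1, 1), and define H(x; ρ) = ∫_{−∞}^x (√(2π) σ₁)^{−1} e^{−u²/(2σ₁²)} Φ(ρu/(σ₁√(1−ρ²))) du and, for a probability density f on ℝ, K(ρ) = 2∫_{−∞}^0 H(x; ρ) f(x) dx. Then (under suitable integrability allowing differentiation under the integral), K'(ρ) = −(1/(π√(1−ρ²))) ∫_{−∞}^0 f(x) exp(−x²/(2σ₁²(1−ρ²))) dx. -/
open MeasureTheory

/-- The standard Gaussian cumulative distribution function. -/
noncomputable def stdGaussianCDF (u : ℝ) : ℝ :=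
  ∫ t in Set.Iic u, (Real.sqrt (2 * Real.pi))⁻¹ * Real.exp (-t ^ 2 / 2)

noncomputable def Hfun (σ₁ : ℝ) (x ρ : ℝ) : ℝ :=
  ∫ u in Set.Iic x,
    (Real.sqrt (2 * Real.pi) * σ₁)⁻¹ * Real.exp (-u ^ 2 / (2 * σ₁ ^ 2)) *
      stdGaussianCDF (ρ * u / (σ₁ * Real.sqrt (1 - ρ ^ 2)))

noncomputable def Kfun (σ₁ : ℝ) (f : ℝ → ℝ) (ρ : ℝ) : ℝ :=
  2 * ∫ x in Set.Iic (0 : ℝ), Hfun σ₁ x ρ * f x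

section Aux
open MeasureTheory Real Set Filter Topology

noncomputable def phi (u : ℝ) : ℝ := (Real.sqrt (2 * Real.pi))⁻¹ * Real.exp (-u ^ 2 / 2)

lemma phi_cont : Continuous phi := by
  unfold phi; fun_prop

lemma phi_nonneg (u : ℝ) : 0 ≤ phi u :=
  mul_nonneg (inv_nonneg.2 (Real.sqrt_nonneg _)) (Real.exp_pos _).le

lemma phi_le (u : ℝ) : phi u ≤ (Real.sqrt (2 * Real.pi))⁻¹ := by
  have := Real.exp_le_one_iff.2 (by nlinarith [sq_nonneg u] : -u ^ 2 / 2 ≤ 0)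
  calc phi u ≤ (Real.sqrt (2 * Real.pi))⁻¹ * 1 := by
        apply mul_le_mul_of_nonneg_left this (inv_nonneg.2 (Real.sqrt_nonneg _))
    _ = _ := mul_one _

lemma exp_neg_sq_eq (b : ℝ) : (fun u : ℝ => Real.exp (-u ^ 2 / (2 * b))) =
    fun u : ℝ => Real.exp (-(2 * b)⁻¹ * u ^ 2) := by
  funext u; congr 1; ring

lemma phi_integrable : Integrable phi := by
  have : Integrable fun u : ℝ => Real.exp (-(2:ℝ)⁻¹ * u ^ 2) :=
    integrable_exp_neg_mul_sq (by norm_num)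
  have h2 : (fun u : ℝ => Real.exp (-u ^ 2 / 2)) = fun u : ℝ => Real.exp (-(2:ℝ)⁻¹ * u ^ 2) := by
    funext u; congr 1; ring
  have h3 : phi = fun u : ℝ => (Real.sqrt (2 * Real.pi))⁻¹ * Real.exp (-(2:ℝ)⁻¹ * u ^ 2) := by
    funext u; unfold phi; congr 2; ring
  rw [h3]
  exact this.const_mul _

lemma stdGaussianCDF_eq (u : ℝ) : (∫ t in Set.Iic u, (Real.sqrt (2 * Real.pi))⁻¹ * Real.exp (-t ^ 2 / 2)) = ∫ t in Set.Iic u, phi t := rfl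

lemma hasDerivAt_stdGaussianCDF' (u : ℝ) :
    HasDerivAt (fun u => ∫ t in Set.Iic u, (Real.sqrt (2 * Real.pi))⁻¹ * Real.exp (-t ^ 2 / 2)) (phi u) u := by
  have key : ∀ v : ℝ, (∫ t in Set.Iic v, phi t) =
      (∫ t in Set.Iic (0:ℝ), phi t) + ∫ t in (0:ℝ)..v, phi t := by
    intro v
    have := intervalIntegral.integral_Iic_sub_Iic (μ := volume) (f := phi)
      phi_integrable.integrableOn phi_integrable.integrableOn (a := 0) (b := v)
    linarith
  have : HasDerivAt (fun v => (∫ t in Set.Iic (0:ℝ), phi t) + ∫ t in (0:ℝ)..v, phi t) (phi u) u := by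
    refine (intervalIntegral.integral_hasDerivAt_right
      (phi_cont.intervalIntegrable _ _)
      (phi_cont.stronglyMeasurableAtFilter _ _) phi_cont.continuousAt).const_add _
  exact this.congr_of_eventuallyEq (Filter.Eventually.of_forall fun v => key v)

lemma hasDerivAt_stdGaussianCDF (u : ℝ) : HasDerivAt stdGaussianCDF (phi u) u :=
  hasDerivAt_stdGaussianCDF' u

lemma stdGaussianCDF_nonneg (u : ℝ) : 0 ≤ stdGaussianCDF u :=
  setIntegral_nonneg measurableSet_Iic fun t _ => phi_nonneg t

lemma stdGaussianCDF_mono : Monotone stdGaussianCDF := fun a b hab =>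
  setIntegral_mono_set phi_integrable.integrableOn (ae_of_all _ phi_nonneg)
    ((Set.Iic_subset_Iic.2 hab).eventuallyLE)

lemma stdGaussianCDF_measurable : Measurable stdGaussianCDF := stdGaussianCDF_mono.measurable

lemma stdGaussianCDF_le (u : ℝ) : stdGaussianCDF u ≤ ∫ t, phi t :=
  setIntegral_le_integral phi_integrable (ae_of_all _ phi_nonneg)

lemma hasDerivAt_inner {σ₁ ρ : ℝ} (hσ : 0 < σ₁) (hρ : ρ ∈ Set.Ioo (-1:ℝ) 1) (u : ℝ) :
    HasDerivAt (fun r => r * u / (σ₁ * Real.sqrt (1 - r ^ 2)))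
      (u / (σ₁ * ((1 - ρ ^ 2) * Real.sqrt (1 - ρ ^ 2)))) ρ := by
  have h1 : 0 < 1 - ρ ^ 2 := by nlinarith [hρ.1, hρ.2]
  set s := Real.sqrt (1 - ρ ^ 2) with hs_def
  have hs : 0 < s := Real.sqrt_pos.2 h1
  have hs2 : s ^ 2 = 1 - ρ ^ 2 := Real.sq_sqrt h1.le
  have hinner : HasDerivAt (fun r : ℝ => 1 - r ^ 2) (-(2 * ρ ^ 1)) ρ := by
    simpa using (hasDerivAt_pow 2 ρ).const_sub 1
  have hsqrt : HasDerivAt (fun r : ℝ => Real.sqrt (1 - r ^ 2))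
      (1 / (2 * s) * -(2 * ρ ^ 1)) ρ :=
    (Real.hasDerivAt_sqrt h1.ne').comp ρ hinner
  have hnum : HasDerivAt (fun r : ℝ => r * u) u ρ := by
    simpa using (hasDerivAt_id ρ).mul_const u
  have hden : HasDerivAt (fun r : ℝ => σ₁ * Real.sqrt (1 - r ^ 2))
      (σ₁ * (1 / (2 * s) * -(2 * ρ ^ 1))) ρ := hsqrt.const_mul σ₁
  have hne : σ₁ * s ≠ 0 := by positivity
  have := hnum.div hden hne
  refine this.congr_deriv (Eq.symm ?_)
  field_simp
  ring_nf
  linear_combination (u*ρ^2) * hs2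

noncomputable def Afun (σ₁ u : ℝ) : ℝ :=
  (Real.sqrt (2 * Real.pi) * σ₁)⁻¹ * Real.exp (-u ^ 2 / (2 * σ₁ ^ 2))

noncomputable def Fp (σ₁ ρ u : ℝ) : ℝ :=
  (2 * Real.pi * (σ₁ ^ 2 * ((1 - ρ ^ 2) * Real.sqrt (1 - ρ ^ 2))))⁻¹ *
    (u * Real.exp (-u ^ 2 / (2 * σ₁ ^ 2 * (1 - ρ ^ 2))))

lemma hasDerivAt_integrand {σ₁ ρ : ℝ} (hσ : 0 < σ₁) (hρ : ρ ∈ Set.Ioo (-1:ℝ) 1) (u : ℝ) :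
    HasDerivAt (fun r => Afun σ₁ u * stdGaussianCDF (r * u / (σ₁ * Real.sqrt (1 - r ^ 2))))
      (Fp σ₁ ρ u) ρ := by
  have h1 : 0 < 1 - ρ ^ 2 := by nlinarith [hρ.1, hρ.2]
  set s := Real.sqrt (1 - ρ ^ 2) with hs_def
  have hs : 0 < s := Real.sqrt_pos.2 h1
  have hs2 : s ^ 2 = 1 - ρ ^ 2 := Real.sq_sqrt h1.le
  have h2π : Real.sqrt (2 * Real.pi) * Real.sqrt (2 * Real.pi) = 2 * Real.pi :=
    Real.mul_self_sqrt (by positivity)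
  have hsp : (0:ℝ) < Real.sqrt (2 * Real.pi) := Real.sqrt_pos.2 (by positivity)
  have h := ((hasDerivAt_stdGaussianCDF (ρ * u / (σ₁ * s))).comp ρ
    (hasDerivAt_inner hσ hρ u)).const_mul (Afun σ₁ u)
  refine h.congr_deriv (Eq.symm ?_)
  have key : Real.exp (-u ^ 2 / (2 * σ₁ ^ 2)) * Real.exp (-(ρ * u / (σ₁ * s)) ^ 2 / 2)
      = Real.exp (-u ^ 2 / (2 * σ₁ ^ 2 * (1 - ρ ^ 2))) := by
    rw [← Real.exp_add]
    congr 1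
    field_simp
    linear_combination (u^2*ρ^2) * hs2
  calc Fp σ₁ ρ u
      = (2 * Real.pi * (σ₁ ^ 2 * ((1 - ρ ^ 2) * s)))⁻¹ *
        (u * (Real.exp (-u ^ 2 / (2 * σ₁ ^ 2)) * Real.exp (-(ρ * u / (σ₁ * s)) ^ 2 / 2))) := by
        rw [key]; rfl
    _ = Afun σ₁ u * (phi (ρ * u / (σ₁ * s)) * (u / (σ₁ * ((1 - ρ ^ 2) * s)))) := by
        unfold Afun phi
        rw [← h2π]
        field_simp
        ring
        rw [Real.sqrt_sq (Real.sqrt_nonneg _)]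

lemma integrable_mul_exp_sq {b : ℝ} (hb : 0 < b) :
    Integrable fun u : ℝ => u * Real.exp (-u ^ 2 / (2 * b)) := by
  have h := integrable_rpow_mul_exp_neg_mul_sq (b := (2*b)⁻¹) (by positivity)
    (s := 1) (by norm_num)
  have he : (fun u : ℝ => u ^ (1:ℝ) * Real.exp (-(2*b)⁻¹ * u ^ 2))
      = fun u : ℝ => u * Real.exp (-u ^ 2 / (2 * b)) := by
    funext u
    rw [Real.rpow_one]
    congr 1
    field_simp
  rwa [he] at h

lemma hasDerivAt_neg_exp_sq {b : ℝ} (hb : 0 < b) (u : ℝ) :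
    HasDerivAt (fun u : ℝ => -b * Real.exp (-u ^ 2 / (2 * b)))
      (u * Real.exp (-u ^ 2 / (2 * b))) u := by
  have hinner : HasDerivAt (fun u : ℝ => -u ^ 2 / (2 * b)) (-(2 * u ^ 1) / (2 * b)) u :=
    ((hasDerivAt_pow 2 u).neg.div_const (2 * b))
  have h := ((Real.hasDerivAt_exp (-u ^ 2 / (2 * b))).comp u hinner).const_mul (-b)
  refine h.congr_deriv (Eq.symm ?_)
  field_simp

lemma tendsto_neg_exp_sq {b : ℝ} (hb : 0 < b) :
    Tendsto (fun u : ℝ => -b * Real.exp (-u ^ 2 / (2 * b))) atBot (𝓝 0) := by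
  have h1 : Tendsto (fun u : ℝ => u ^ 2) atBot atTop := by
    have := (tendsto_pow_atTop (n := 2) (by norm_num)).comp (tendsto_abs_atBot_atTop (G := ℝ))
    refine this.congr fun u => ?_
    simp [sq_abs]
  have h2 : Tendsto (fun u : ℝ => -u ^ 2 / (2 * b)) atBot atBot := by
    apply Tendsto.atBot_div_const (by positivity)
    exact tendsto_neg_atTop_atBot.comp h1
  have h3 : Tendsto (fun u : ℝ => Real.exp (-u ^ 2 / (2 * b))) atBot (𝓝 0) :=
    Real.tendsto_exp_atBot.comp h2
  have := h3.const_mul (-b)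
  simpa using this

lemma integral_Iic_mul_exp {b : ℝ} (hb : 0 < b) (x : ℝ) :
    ∫ u in Set.Iic x, u * Real.exp (-u ^ 2 / (2 * b))
      = -b * Real.exp (-x ^ 2 / (2 * b)) := by
  rw [MeasureTheory.integral_Iic_of_hasDerivAt_of_tendsto'
    (fun u _ => hasDerivAt_neg_exp_sq hb u)
    (integrable_mul_exp_sq hb).integrableOn (tendsto_neg_exp_sq hb)]
  ring

lemma Afun_integrable {σ₁ : ℝ} (hσ : 0 < σ₁) : Integrable (Afun σ₁) := by
  have : Integrable fun u : ℝ => Real.exp (-(2 * σ₁ ^ 2)⁻¹ * u ^ 2) :=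
    integrable_exp_neg_mul_sq (by positivity)
  have h3 : Afun σ₁ = fun u : ℝ =>
      (Real.sqrt (2 * Real.pi) * σ₁)⁻¹ * Real.exp (-(2 * σ₁ ^ 2)⁻¹ * u ^ 2) := by
    funext u; unfold Afun; congr 2; field_simp
  rw [h3]
  exact this.const_mul _

lemma Afun_nonneg {σ₁ : ℝ} (hσ : 0 < σ₁) (u : ℝ) : 0 ≤ Afun σ₁ u := by
  unfold Afun
  positivity

lemma Afun_cont (σ₁ : ℝ) : Continuous (Afun σ₁) := by
  unfold Afun; fun_prop

lemma ball_facts {ρ : ℝ} (hρ : ρ ∈ Set.Ioo (-1:ℝ) 1) :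
    ∀ r ∈ Metric.ball ρ ((1 - |ρ|)/2), r ∈ Set.Ioo (-1:ℝ) 1 ∧ (1 - |ρ|)/2 ≤ 1 - r ^ 2 := by
  intro r hr
  have hρ1 : |ρ| < 1 := abs_lt.2 ⟨hρ.1, hρ.2⟩
  have hd : |r - ρ| < (1 - |ρ|)/2 := by
    rw [Metric.mem_ball, Real.dist_eq] at hr; exact hr
  have habs : |r| < (1 + |ρ|)/2 := by
    have h1 := abs_sub_abs_le_abs_sub r ρ
    linarith
  have h2 : r ^ 2 = |r| ^ 2 := (sq_abs r).symm
  constructor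
  · exact abs_lt.1 (by linarith)
  · nlinarith [abs_nonneg r]

lemma measurable_F {σ₁ : ℝ} (r : ℝ) :
    Measurable fun u => Afun σ₁ u * stdGaussianCDF (r * u / (σ₁ * Real.sqrt (1 - r ^ 2))) := by
  apply ((Afun_cont σ₁).measurable).mul
  exact stdGaussianCDF_measurable.comp ((measurable_id.const_mul r).div_const _)

lemma hasDerivAt_Hfun {σ₁ : ℝ} (hσ : 0 < σ₁) (x : ℝ) {ρ : ℝ} (hρ : ρ ∈ Set.Ioo (-1:ℝ) 1) :
    HasDerivAt (fun r => Hfun σ₁ x r)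
      (-(1 / (2 * Real.pi * Real.sqrt (1 - ρ ^ 2))) *
        Real.exp (-x ^ 2 / (2 * σ₁ ^ 2 * (1 - ρ ^ 2)))) ρ := by
  have h1 : 0 < 1 - ρ ^ 2 := by nlinarith [hρ.1, hρ.2]
  set δ : ℝ := (1 - |ρ|)/2 with hδ_def
  have hρ1 : |ρ| < 1 := abs_lt.2 ⟨hρ.1, hρ.2⟩
  have hδ : 0 < δ := by simp only [hδ_def]; linarith
  have key := hasDerivAt_integral_of_dominated_loc_of_deriv_le (μ := volume.restrict (Set.Iic x))
    (F := fun r u => Afun σ₁ u * stdGaussianCDF (r * u / (σ₁ * Real.sqrt (1 - r ^ 2))))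
    (F' := fun r u => Fp σ₁ r u) (x₀ := ρ)
    (bound := fun u => (2 * Real.pi * (σ₁ ^ 2 * (δ * Real.sqrt δ)))⁻¹ *
      ‖u * Real.exp (-u ^ 2 / (2 * σ₁ ^ 2))‖)
    (Metric.ball_mem_nhds ρ hδ)
    (Filter.Eventually.of_forall fun r => (measurable_F r).aestronglyMeasurable)
    ?_ ?_ ?_ ?_ ?_
  · obtain ⟨-, hderiv⟩ := key
    have heq : (fun r => Hfun σ₁ x r) = fun r => ∫ u in Set.Iic x,
        Afun σ₁ u * stdGaussianCDF (r * u / (σ₁ * Real.sqrt (1 - r ^ 2))) := rfl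
    rw [heq]
    refine hderiv.congr_deriv (Eq.symm ?_)
    -- evaluate ∫ Fp
    have hb : 0 < σ₁ ^ 2 * (1 - ρ ^ 2) := by positivity
    have hFp : (fun u => Fp σ₁ ρ u) = fun u =>
        (2 * Real.pi * (σ₁ ^ 2 * ((1 - ρ ^ 2) * Real.sqrt (1 - ρ ^ 2))))⁻¹ *
          (u * Real.exp (-u ^ 2 / (2 * (σ₁ ^ 2 * (1 - ρ ^ 2))))) := by
      funext u; unfold Fp; congr 3; ring
    rw [hFp, MeasureTheory.integral_const_mul, integral_Iic_mul_exp hb x]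
    have hs : 0 < Real.sqrt (1 - ρ ^ 2) := Real.sqrt_pos.2 h1
    have hs2 : Real.sqrt (1 - ρ ^ 2) ^ 2 = 1 - ρ ^ 2 := Real.sq_sqrt h1.le
    have hexp : Real.exp (-x ^ 2 / (2 * (σ₁ ^ 2 * (1 - ρ ^ 2))))
        = Real.exp (-x ^ 2 / (2 * σ₁ ^ 2 * (1 - ρ ^ 2))) := by congr 1; ring
    rw [hexp]
    have hπ : (0:ℝ) < Real.pi := Real.pi_pos
    field_simp
  · -- hF_int
    apply Integrable.mono' ((Afun_integrable hσ).const_mul (∫ t, phi t)).restrict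
      (measurable_F ρ).aestronglyMeasurable
    refine Filter.Eventually.of_forall fun u => ?_
    rw [Real.norm_eq_abs, abs_mul, abs_of_nonneg (Afun_nonneg hσ u),
      abs_of_nonneg (stdGaussianCDF_nonneg _)]
    calc Afun σ₁ u * stdGaussianCDF _ ≤ Afun σ₁ u * (∫ t, phi t) :=
          mul_le_mul_of_nonneg_left (stdGaussianCDF_le _) (Afun_nonneg hσ u)
      _ = (∫ t, phi t) * Afun σ₁ u := mul_comm _ _
  · -- hF'_meas
    apply Measurable.aestronglyMeasurable
    unfold Fp
    fun_prop
  · -- h_bound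
    refine Filter.Eventually.of_forall fun u => fun r hr => ?_
    obtain ⟨hrIoo, hrδ⟩ := ball_facts hρ r hr
    have h1r : 0 < 1 - r ^ 2 := by nlinarith [hrIoo.1, hrIoo.2]
    have hsr : 0 < Real.sqrt (1 - r ^ 2) := Real.sqrt_pos.2 h1r
    have hsδ : 0 < Real.sqrt δ := Real.sqrt_pos.2 hδ
    unfold Fp
    have hk : |(2 * Real.pi * (σ₁ ^ 2 * ((1 - r ^ 2) * Real.sqrt (1 - r ^ 2))))⁻¹|
        = (2 * Real.pi * (σ₁ ^ 2 * ((1 - r ^ 2) * Real.sqrt (1 - r ^ 2))))⁻¹ :=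
      abs_of_nonneg (by positivity)
    simp only [Real.norm_eq_abs, abs_mul, hk, abs_of_nonneg (Real.exp_pos _).le]
    have hsle : Real.sqrt δ ≤ Real.sqrt (1 - r ^ 2) := Real.sqrt_le_sqrt hrδ
    have hinv : (2 * Real.pi * (σ₁ ^ 2 * ((1 - r ^ 2) * Real.sqrt (1 - r ^ 2))))⁻¹
        ≤ (2 * Real.pi * (σ₁ ^ 2 * (δ * Real.sqrt δ)))⁻¹ := by
      have hle : 2 * Real.pi * (σ₁ ^ 2 * (δ * Real.sqrt δ))
          ≤ 2 * Real.pi * (σ₁ ^ 2 * ((1 - r ^ 2) * Real.sqrt (1 - r ^ 2))) := by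
        have : δ * Real.sqrt δ ≤ (1 - r ^ 2) * Real.sqrt (1 - r ^ 2) :=
          mul_le_mul hrδ hsle hsδ.le h1r.le
        have h2 := mul_le_mul_of_nonneg_left this
          (mul_nonneg (by positivity : (0:ℝ) ≤ 2 * Real.pi) (sq_nonneg σ₁))
        nlinarith [h2]
      exact inv_anti₀ (by positivity) hle
    have hexp : Real.exp (-u ^ 2 / (2 * σ₁ ^ 2 * (1 - r ^ 2))) ≤ Real.exp (-u ^ 2 / (2 * σ₁ ^ 2)) := by
      apply Real.exp_le_exp.2
      rw [div_le_div_iff₀ (by positivity) (by positivity)]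
      nlinarith [sq_nonneg (σ₁ * u * r)]
    exact mul_le_mul hinv (mul_le_mul_of_nonneg_left hexp (abs_nonneg u))
      (by positivity) (by positivity)
  · -- bound integrable
    exact (((integrable_mul_exp_sq (b := σ₁ ^ 2) (by positivity)).norm).const_mul _).restrict
  · -- h_diff
    refine Filter.Eventually.of_forall fun u r hr => ?_
    exact hasDerivAt_integrand hσ (ball_facts hρ r hr).1 u

lemma Hfun_integrand_integrable {σ₁ : ℝ} (hσ : 0 < σ₁) (r : ℝ) :
    Integrable (fun u => Afun σ₁ u * stdGaussianCDF (r * u / (σ₁ * Real.sqrt (1 - r ^ 2)))) := by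
  apply Integrable.mono' ((Afun_integrable hσ).const_mul (∫ t, phi t))
    (measurable_F r).aestronglyMeasurable
  refine Filter.Eventually.of_forall fun u => ?_
  rw [Real.norm_eq_abs, abs_mul, abs_of_nonneg (Afun_nonneg hσ u),
    abs_of_nonneg (stdGaussianCDF_nonneg _)]
  calc Afun σ₁ u * stdGaussianCDF _ ≤ Afun σ₁ u * (∫ t, phi t) :=
        mul_le_mul_of_nonneg_left (stdGaussianCDF_le _) (Afun_nonneg hσ u)
    _ = (∫ t, phi t) * Afun σ₁ u := mul_comm _ _

lemma Hfun_nonneg {σ₁ : ℝ} (hσ : 0 < σ₁) (x ρ : ℝ) : 0 ≤ Hfun σ₁ x ρ :=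
  setIntegral_nonneg measurableSet_Iic fun u _ =>
    mul_nonneg (Afun_nonneg hσ u) (stdGaussianCDF_nonneg _)

lemma Hfun_le {σ₁ : ℝ} (hσ : 0 < σ₁) (x ρ : ℝ) :
    Hfun σ₁ x ρ ≤ (∫ t, phi t) * ∫ u, Afun σ₁ u := by
  have hCΦ : 0 ≤ ∫ t, phi t := integral_nonneg phi_nonneg
  calc Hfun σ₁ x ρ
      ≤ ∫ u in Set.Iic x, (∫ t, phi t) * Afun σ₁ u := by
        apply setIntegral_mono (Hfun_integrand_integrable hσ ρ).integrableOn
          (((Afun_integrable hσ).const_mul _).integrableOn)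
        intro u
        calc Afun σ₁ u * stdGaussianCDF _ ≤ Afun σ₁ u * (∫ t, phi t) :=
              mul_le_mul_of_nonneg_left (stdGaussianCDF_le _) (Afun_nonneg hσ u)
          _ = (∫ t, phi t) * Afun σ₁ u := mul_comm _ _
    _ = (∫ t, phi t) * ∫ u in Set.Iic x, Afun σ₁ u := by rw [MeasureTheory.integral_const_mul]
    _ ≤ (∫ t, phi t) * ∫ u, Afun σ₁ u := by
        apply mul_le_mul_of_nonneg_left _ hCΦ
        exact setIntegral_le_integral (Afun_integrable hσ) (ae_of_all _ (Afun_nonneg hσ))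

lemma Hfun_mono {σ₁ : ℝ} (hσ : 0 < σ₁) (ρ : ℝ) : Monotone fun x => Hfun σ₁ x ρ := by
  intro a b hab
  apply setIntegral_mono_set (Hfun_integrand_integrable hσ ρ).integrableOn
    (ae_of_all _ fun u => mul_nonneg (Afun_nonneg hσ u) (stdGaussianCDF_nonneg _))
    ((Set.Iic_subset_Iic.2 hab).eventuallyLE)

theorem stmt_18 (σ₁ : ℝ) (hσ₁ : 0 < σ₁) (f : ℝ → ℝ)
    (hfmeas : Measurable f) (hfnonneg : ∀ x, 0 ≤ f x)
    (hfprob : ∫ x, f x = 1) :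
    ∀ ρ ∈ Set.Ioo (-1 : ℝ) 1,
      HasDerivAt (Kfun σ₁ f)
        (-(1 / (Real.pi * Real.sqrt (1 - ρ ^ 2))) *
          ∫ x in Set.Iic (0 : ℝ), f x * Real.exp (-x ^ 2 / (2 * σ₁ ^ 2 * (1 - ρ ^ 2)))) ρ := by
  intro ρ hρ
  have hfint : Integrable f := by
    by_contra h
    rw [MeasureTheory.integral_undef h] at hfprob
    norm_num at hfprob
  have h1 : 0 < 1 - ρ ^ 2 := by nlinarith [hρ.1, hρ.2]
  have hs : 0 < Real.sqrt (1 - ρ ^ 2) := Real.sqrt_pos.2 h1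
  set δ : ℝ := (1 - |ρ|)/2 with hδ_def
  have hρ1 : |ρ| < 1 := abs_lt.2 ⟨hρ.1, hρ.2⟩
  have hδ : 0 < δ := by simp only [hδ_def]; linarith
  have hsδ : 0 < Real.sqrt δ := Real.sqrt_pos.2 hδ
  have hmeasH : ∀ r : ℝ, Measurable fun x => Hfun σ₁ x r := fun r =>
    (Hfun_mono hσ₁ r).measurable
  have key := hasDerivAt_integral_of_dominated_loc_of_deriv_le
    (μ := volume.restrict (Set.Iic (0:ℝ)))
    (F := fun r x => Hfun σ₁ x r * f x)
    (F' := fun r x => (-(1 / (2 * Real.pi * Real.sqrt (1 - r ^ 2))) *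
        Real.exp (-x ^ 2 / (2 * σ₁ ^ 2 * (1 - r ^ 2)))) * f x)
    (x₀ := ρ)
    (bound := fun x => (2 * Real.pi * Real.sqrt δ)⁻¹ * f x)
    (Metric.ball_mem_nhds ρ hδ)
    (Filter.Eventually.of_forall fun r => ((hmeasH r).mul hfmeas).aestronglyMeasurable)
    ?_ ?_ ?_ ?_ ?_
  · obtain ⟨-, hderiv⟩ := key
    have h2 := hderiv.const_mul 2
    have heq : Kfun σ₁ f = fun r => 2 * ∫ x in Set.Iic (0:ℝ), Hfun σ₁ x r * f x := rfl
    rw [heq]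
    refine h2.congr_deriv (Eq.symm ?_)
    have hre : (fun x => (-(1 / (2 * Real.pi * Real.sqrt (1 - ρ ^ 2))) *
        Real.exp (-x ^ 2 / (2 * σ₁ ^ 2 * (1 - ρ ^ 2)))) * f x)
        = fun x => (-(1 / (2 * Real.pi * Real.sqrt (1 - ρ ^ 2)))) *
          (f x * Real.exp (-x ^ 2 / (2 * σ₁ ^ 2 * (1 - ρ ^ 2)))) := by
      funext x; ring
    rw [hre, MeasureTheory.integral_const_mul]
    have hπ := Real.pi_pos
    field_simp
  · -- hF_int
    apply Integrable.mono' ((hfint.const_mul ((∫ t, phi t) * ∫ u, Afun σ₁ u)).restrict)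
      (((hmeasH ρ).mul hfmeas).aestronglyMeasurable)
    refine Filter.Eventually.of_forall fun x => ?_
    rw [Real.norm_eq_abs, Pi.mul_apply, abs_mul, abs_of_nonneg (Hfun_nonneg hσ₁ x ρ),
      abs_of_nonneg (hfnonneg x)]
    calc Hfun σ₁ x ρ * f x ≤ ((∫ t, phi t) * ∫ u, Afun σ₁ u) * f x :=
          mul_le_mul_of_nonneg_right (Hfun_le hσ₁ x ρ) (hfnonneg x)
      _ = _ := rfl
  · -- hF'_meas
    apply Measurable.aestronglyMeasurable
    fun_prop
  · -- h_bound
    refine Filter.Eventually.of_forall fun x r hr => ?_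
    obtain ⟨hrIoo, hrδ⟩ := ball_facts hρ r hr
    have h1r : 0 < 1 - r ^ 2 := by nlinarith [hrIoo.1, hrIoo.2]
    have hsr : 0 < Real.sqrt (1 - r ^ 2) := Real.sqrt_pos.2 h1r
    have hsle : Real.sqrt δ ≤ Real.sqrt (1 - r ^ 2) := Real.sqrt_le_sqrt hrδ
    rw [Real.norm_eq_abs, abs_mul, abs_mul, abs_of_nonneg (hfnonneg x),
      abs_of_nonneg (Real.exp_pos _).le, abs_neg, abs_of_nonneg
      (by positivity : (0:ℝ) ≤ 1 / (2 * Real.pi * Real.sqrt (1 - r ^ 2)))]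
    have hb1 : 1 / (2 * Real.pi * Real.sqrt (1 - r ^ 2)) ≤ (2 * Real.pi * Real.sqrt δ)⁻¹ := by
      rw [one_div]
      apply inv_anti₀ (by positivity)
      have hπ := Real.pi_pos
      nlinarith [hsle]
    have hb2 : Real.exp (-x ^ 2 / (2 * σ₁ ^ 2 * (1 - r ^ 2))) ≤ 1 := by
      apply Real.exp_le_one_iff.2
      apply div_nonpos_of_nonpos_of_nonneg (by nlinarith [sq_nonneg x])
      positivity
    calc 1 / (2 * Real.pi * Real.sqrt (1 - r ^ 2)) *
          Real.exp (-x ^ 2 / (2 * σ₁ ^ 2 * (1 - r ^ 2))) * f x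
        ≤ (2 * Real.pi * Real.sqrt δ)⁻¹ * 1 * f x := by
          apply mul_le_mul_of_nonneg_right _ (hfnonneg x)
          exact mul_le_mul hb1 hb2 (Real.exp_pos _).le (by positivity)
      _ = (2 * Real.pi * Real.sqrt δ)⁻¹ * f x := by ring
  · -- bound integrable
    exact (hfint.const_mul _).restrict
  · -- h_diff
    refine Filter.Eventually.of_forall fun x r hr => ?_
    exact (hasDerivAt_Hfun hσ₁ x (ball_facts hρ r hr).1).mul_const (f x)

end Aux
end
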